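/- Fix c with 1 < c < 832/825 and set D = X^{1/11 − 0.001}. There is a constant C > 0 (depending on c) such that for all sufficiently large X the following holds. Let λ(d) be complex numbers defined for positive integers d ≤ D with |λ(d)| ≤ 1, and λ(d) = 0 whenever d is even or d is not squarefree, and define L(t,X) = Σ_{d ≤ D} λ(d) Σ_{X/2 < p ≤ X, p+2 ≡ 0 (mod d)} e(p^c t) log p, where p runs over primes. Then ∫_{0}^{1} |L(t,X)|² dt ≤ C · X (log X)^5. -/

import Mathlib

open Real Finset intervalIntegral

noncomputable def Efun (β t : ℝ) : ℂ :=
  Complex.exp (2 * (Real.pi : ℂ) * Complex.I * ((β * t : ℝ) : ℂ))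

lemma Efun_continuous (β : ℝ) : Continuous (Efun β) := by
  unfold Efun
  exact Complex.continuous_exp.comp (by continuity)

lemma Efun_integrable (β : ℝ) : IntervalIntegrable (Efun β) MeasureTheory.volume 0 1 :=
  (Efun_continuous β).intervalIntegrable 0 1

lemma Efun_mul_conj (β γ t : ℝ) :
    Efun β t * (starRingEnd ℂ) (Efun γ t) = Efun (β - γ) t := by
  unfold Efun
  rw [← Complex.exp_conj, ← Complex.exp_add]
  congr 1
  simp only [map_mul, Complex.conj_I, Complex.conj_ofReal, map_ofNat]
  push_cast
  ring

lemma expand_integral (P : Finset ℕ) (w : ℕ → ℂ) (β : ℕ → ℝ) :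
    (∫ t in (0:ℝ)..1, ‖∑ p ∈ P, w p * Efun (β p) t‖ ^ 2) ≤
      ∑ p ∈ P, ∑ q ∈ P, ‖w p‖ * ‖w q‖ * ‖∫ t in (0:ℝ)..1, Efun (β p - β q) t‖ := by
  set F : ℝ → ℂ := fun t => ∑ p ∈ P, w p * Efun (β p) t with hF
  have hFcont : Continuous F := by
    apply continuous_finset_sum
    intro p _
    exact continuous_const.mul (Efun_continuous (β p))
  have hGcont : Continuous (fun t => F t * (starRingEnd ℂ) (F t)) :=
    hFcont.mul (Complex.continuous_conj.comp hFcont)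
  have hform : ∀ t : ℝ, F t * (starRingEnd ℂ) (F t) =
      ∑ p ∈ P, ∑ q ∈ P, (w p * (starRingEnd ℂ) (w q)) * Efun (β p - β q) t := by
    intro t
    rw [hF]
    simp only [map_sum, map_mul]
    rw [Finset.sum_mul_sum]
    refine Finset.sum_congr rfl fun p _ => Finset.sum_congr rfl fun q _ => ?_
    rw [← Efun_mul_conj (β p) (β q) t]
    ring
  have hnorm : ∀ t : ℝ, ‖F t‖ ^ 2 = (F t * (starRingEnd ℂ) (F t)).re := by
    intro t
    rw [Complex.mul_conj, Complex.ofReal_re, Complex.normSq_eq_norm_sq]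
  calc (∫ t in (0:ℝ)..1, ‖F t‖ ^ 2)
      = (∫ t in (0:ℝ)..1, F t * (starRingEnd ℂ) (F t)).re := by
        rw [intervalIntegral.integral_congr (g := fun t => (F t * (starRingEnd ℂ) (F t)).re)
          (fun t _ => hnorm t)]
        exact (Complex.reCLM.intervalIntegral_comp_comm
          (hGcont.intervalIntegrable 0 1)).trans rfl
    _ = (∑ p ∈ P, ∑ q ∈ P, (w p * (starRingEnd ℂ) (w q)) *
          ∫ t in (0:ℝ)..1, Efun (β p - β q) t).re := by
        congr 1
        rw [intervalIntegral.integral_congr (g := fun t =>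
          ∑ p ∈ P, ∑ q ∈ P, (w p * (starRingEnd ℂ) (w q)) * Efun (β p - β q) t)
          (fun t _ => hform t)]
        rw [intervalIntegral.integral_finset_sum]
        · refine Finset.sum_congr rfl fun p _ => ?_
          rw [intervalIntegral.integral_finset_sum]
          · refine Finset.sum_congr rfl fun q _ => ?_
            exact intervalIntegral.integral_const_mul _ _
          · intro q _
            exact (continuous_const.mul (Efun_continuous _)).intervalIntegrable 0 1
        · intro p _
          apply Continuous.intervalIntegrable
          exact continuous_finset_sum _ fun q _ =>
            continuous_const.mul (Efun_continuous _)
    _ ≤ ∑ p ∈ P, ∑ q ∈ P, ‖w p‖ * ‖w q‖ * ‖∫ t in (0:ℝ)..1, Efun (β p - β q) t‖ := by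
        rw [Complex.re_sum]
        refine Finset.sum_le_sum fun p _ => ?_
        rw [Complex.re_sum]
        refine Finset.sum_le_sum fun q _ => ?_
        refine (Complex.re_le_norm _).trans ?_
        rw [norm_mul, norm_mul, RCLike.norm_conj]

lemma Efun_zero (t : ℝ) : Efun 0 t = 1 := by
  unfold Efun
  norm_num

lemma norm_intEfun_le_inv (β : ℝ) (hβ : β ≠ 0) :
    ‖∫ t in (0:ℝ)..1, Efun β t‖ ≤ 1 / |β| := by
  have hK : (2 * (Real.pi : ℂ) * Complex.I * (β : ℂ)) ≠ 0 := by
    simp [Complex.I_ne_zero, Real.pi_ne_zero, hβ]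
  have heq : ∀ t : ℝ, Efun β t =
      Complex.exp ((2 * (Real.pi : ℂ) * Complex.I * (β : ℂ)) * (t : ℂ)) := by
    intro t; unfold Efun; congr 1; push_cast; ring
  rw [intervalIntegral.integral_congr (g := fun t : ℝ =>
      Complex.exp ((2 * (Real.pi : ℂ) * Complex.I * (β : ℂ)) * (t : ℂ)))
      (fun t _ => heq t)]
  rw [integral_exp_mul_complex hK]
  rw [norm_div]
  have h2 : ‖Complex.exp (2 * (Real.pi : ℂ) * Complex.I * (β:ℂ) * (1:ℝ)) -
      Complex.exp (2 * (Real.pi : ℂ) * Complex.I * (β:ℂ) * (0:ℝ))‖ ≤ 2 := by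
    refine (norm_sub_le _ _).trans ?_
    have hn : ∀ x : ℝ, ‖Complex.exp (2 * (Real.pi : ℂ) * Complex.I * (β:ℂ) * (x:ℂ))‖ = 1 := by
      intro x
      rw [Complex.norm_exp]
      have : (2 * (Real.pi : ℂ) * Complex.I * (β:ℂ) * (x:ℂ)).re = 0 := by
        simp [Complex.mul_re, Complex.mul_im]
      rw [this, Real.exp_zero]
    rw [hn 1, hn 0]; norm_num
  have hden : ‖(2 * (Real.pi : ℂ) * Complex.I * (β:ℂ))‖ = 2 * Real.pi * |β| := by
    simp [norm_mul, Complex.norm_I, Complex.norm_real, Real.norm_eq_abs,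
      abs_of_pos Real.pi_pos]
  calc ‖Complex.exp (2 * (Real.pi : ℂ) * Complex.I * (β:ℂ) * (1:ℝ)) -
      Complex.exp (2 * (Real.pi : ℂ) * Complex.I * (β:ℂ) * (0:ℝ))‖ /
      ‖(2 * (Real.pi : ℂ) * Complex.I * (β:ℂ))‖
      ≤ 2 / (2 * Real.pi * |β|) := by
        rw [hden]
        have hb : (0:ℝ) < 2 * Real.pi * |β| := by positivity
        gcongr
    _ ≤ 1 / |β| := by
        rw [div_le_div_iff₀ (by positivity) (by positivity)]
        nlinarith [Real.pi_gt_three, abs_pos.mpr hβ, abs_nonneg β]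

lemma hsum_le_div (n : ℕ) : ∑ k ∈ Finset.Icc 1 n, (1 / (k:ℝ)) ≤ 1 + Real.log n := by
  have h1 : ∑ k ∈ Finset.Icc 1 n, (1 / (k:ℝ)) = (harmonic n : ℝ) := by
    rw [harmonic_eq_sum_Icc]
    push_cast
    simp [one_div]
  rw [h1]
  exact_mod_cast harmonic_le_one_add_log n

/-- Sum of reciprocal distances. -/
lemma recip_dist_le (n p : ℕ) (hp : p ∈ Finset.Icc 1 n) :
    ∑ q ∈ (Finset.Icc 1 n).erase p, 1 / |(p:ℝ) - (q:ℝ)| ≤ 2 * (1 + Real.log n) := by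
  classical
  have key : ∀ (A : Finset ℕ) (g : ℕ → ℕ), (∀ q ∈ A, g q ∈ Finset.Icc 1 n) →
      (Set.InjOn g A) → (∀ q ∈ A, |(p:ℝ) - (q:ℝ)| = (g q : ℝ)) →
      ∑ q ∈ A, 1 / |(p:ℝ) - (q:ℝ)| ≤ 1 + Real.log n := by
    intro A g hmem hinj habs
    have : ∑ q ∈ A, 1 / |(p:ℝ) - (q:ℝ)| = ∑ k ∈ A.image g, 1 / (k:ℝ) := by
      rw [Finset.sum_image (fun x hx y hy h => hinj hx hy h)]
      exact Finset.sum_congr rfl fun q hq => by rw [habs q hq]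
    rw [this]
    refine le_trans (Finset.sum_le_sum_of_subset_of_nonneg ?_ ?_) (hsum_le_div n)
    · intro k hk
      obtain ⟨q, hq, rfl⟩ := Finset.mem_image.mp hk
      exact hmem q hq
    · intro k _ _; positivity
  have hsplit : (Finset.Icc 1 n).erase p =
      ((Finset.Icc 1 n).filter (· < p)) ∪ ((Finset.Icc 1 n).filter (p < ·)) := by
    ext q
    simp only [Finset.mem_erase, Finset.mem_union, Finset.mem_filter]
    constructor
    · rintro ⟨hne, hq⟩
      rcases lt_or_gt_of_ne hne with h | h
      · exact Or.inl ⟨hq, h⟩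
      · exact Or.inr ⟨hq, h⟩
    · rintro (⟨hq, h⟩ | ⟨hq, h⟩)
      · exact ⟨(ne_of_lt h), hq⟩
      · exact ⟨(ne_of_gt h), hq⟩
  have hdisj : Disjoint ((Finset.Icc 1 n).filter (· < p))
      ((Finset.Icc 1 n).filter (p < ·)) := by
    rw [Finset.disjoint_left]
    intro a ha hb
    simp only [Finset.mem_filter] at ha hb
    omega
  rw [hsplit, Finset.sum_union hdisj]
  have hA : ∑ q ∈ (Finset.Icc 1 n).filter (· < p), 1 / |(p:ℝ) - (q:ℝ)| ≤ 1 + Real.log n := by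
    apply key _ (fun q => p - q)
    · intro q hq
      simp only [Finset.mem_filter, Finset.mem_Icc] at hq ⊢
      simp only [Finset.mem_Icc] at hp
      omega
    · intro a ha b hb h
      simp only [Finset.coe_filter, Set.mem_setOf_eq, Finset.mem_Icc] at ha hb
      simp only at h
      omega
    · intro q hq
      simp only [Finset.mem_filter] at hq
      have h := hq.2
      rw [abs_of_pos (by exact_mod_cast sub_pos.mpr (by exact_mod_cast h : (q:ℝ) < p))]
      push_cast [Nat.cast_sub h.le]
      ring
  have hB : ∑ q ∈ (Finset.Icc 1 n).filter (p < ·), 1 / |(p:ℝ) - (q:ℝ)| ≤ 1 + Real.log n := by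
    apply key _ (fun q => q - p)
    · intro q hq
      simp only [Finset.mem_filter, Finset.mem_Icc] at hq ⊢
      omega
    · intro a ha b hb h
      simp only [Finset.coe_filter, Set.mem_setOf_eq, Finset.mem_Icc] at ha hb
      simp only at h
      omega
    · intro q hq
      simp only [Finset.mem_filter] at hq
      have h := hq.2
      rw [abs_of_neg (by exact_mod_cast sub_neg.mpr (by exact_mod_cast h : (p:ℝ) < q))]
      push_cast [Nat.cast_sub h.le]
      ring
  linarith

lemma hsum_le (n : ℕ) : ∑ k ∈ Finset.Icc 1 n, ((k:ℝ))⁻¹ ≤ 1 + Real.log n := by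
  have h1 : ∑ k ∈ Finset.Icc 1 n, ((k:ℝ))⁻¹ = (harmonic n : ℝ) := by
    rw [harmonic_eq_sum_Icc]; push_cast; rfl
  rw [h1]
  exact_mod_cast harmonic_le_one_add_log n

/-- number of m in [1, M] divisible by k, real bound -/
lemma count_dvd_le (M k : ℕ) (hk : 1 ≤ k) :
    (((Finset.Icc 1 M).filter (fun m => k ∣ m)).card : ℝ) ≤ (M : ℝ) / (k : ℝ) := by
  have : Finset.Icc 1 M = Finset.Ioc 0 M := rfl
  rw [this, Nat.Ioc_filter_dvd_card_eq_div]
  exact Nat.cast_div_le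

lemma recip_dvd_sum_le (D' g : ℕ) (hg : 1 ≤ g) :
    ∑ d ∈ (Finset.Icc 1 D').filter (fun d => g ∣ d), ((d:ℝ))⁻¹ ≤
      (g:ℝ)⁻¹ * (1 + Real.log D') := by
  classical
  set F := (Finset.Icc 1 D').filter (fun d => g ∣ d) with hFdef
  have hgpos : (0:ℝ) < g := by exact_mod_cast hg
  have step1 : ∑ d ∈ F, ((d:ℝ))⁻¹ = (g:ℝ)⁻¹ * ∑ d ∈ F, (((d / g : ℕ) : ℝ))⁻¹ := by
    rw [Finset.mul_sum]
    refine Finset.sum_congr rfl fun d hd => ?_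
    simp only [hFdef, Finset.mem_filter] at hd
    have hdvd : g ∣ d := hd.2
    conv_lhs => rw [← Nat.mul_div_cancel' hdvd]
    push_cast
    rw [mul_inv]
  rw [step1]
  have step2 : ∑ d ∈ F, (((d / g : ℕ) : ℝ))⁻¹ ≤ 1 + Real.log D' := by
    rw [← Finset.sum_image (f := fun k : ℕ => ((k:ℝ))⁻¹) (g := fun d => d / g) ?_]
    · refine le_trans (Finset.sum_le_sum_of_subset_of_nonneg ?_ ?_) (hsum_le D')
      · intro k hk
        obtain ⟨d, hd, rfl⟩ := Finset.mem_image.mp hk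
        simp only [hFdef, Finset.mem_filter, Finset.mem_Icc] at hd
        rw [Finset.mem_Icc]
        obtain ⟨⟨h1, h2⟩, h3⟩ := hd
        constructor
        · exact (Nat.one_le_div_iff (by omega)).mpr (Nat.le_of_dvd (by omega) h3)
        · exact le_trans (Nat.div_le_self d g) h2
      · intro k _ _; positivity
    · intro a ha b hb h
      simp only [Finset.mem_coe, hFdef, Finset.mem_filter] at ha hb
      simp only at h
      rw [← Nat.mul_div_cancel' ha.2, ← Nat.mul_div_cancel' hb.2, h]
  calc (g:ℝ)⁻¹ * ∑ d ∈ F, (((d / g : ℕ) : ℝ))⁻¹ ≤ (g:ℝ)⁻¹ * (1 + Real.log D') := by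
        apply mul_le_mul_of_nonneg_left step2 (by positivity)
    _ = _ := rfl

lemma divisor_sq_sum (N D' : ℕ) :
    ∑ n ∈ Finset.Icc 1 N, (((Finset.Icc 1 D').filter (· ∣ (n+2))).card : ℝ)^2 ≤
      ((N:ℝ) + 2) * (1 + Real.log D')^3 := by
  classical
  set I := Finset.Icc 1 D' with hI
  -- step 1: card^2 as indicator sum over pairs
  have step1 : ∀ n : ℕ, ((I.filter (· ∣ (n+2))).card : ℝ)^2 =
      ∑ x ∈ I ×ˢ I, (if x.1 ∣ (n+2) ∧ x.2 ∣ (n+2) then (1:ℝ) else 0) := by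
    intro n
    rw [← Finset.sum_filter]
    have : (I ×ˢ I).filter (fun x => x.1 ∣ (n+2) ∧ x.2 ∣ (n+2)) =
        (I.filter (· ∣ (n+2))) ×ˢ (I.filter (· ∣ (n+2))) := by
      ext x
      simp only [Finset.mem_filter, Finset.mem_product]
      tauto
    rw [this]
    simp [Finset.sum_const, Finset.card_product, pow_two]
  calc ∑ n ∈ Finset.Icc 1 N, ((I.filter (· ∣ (n+2))).card : ℝ)^2
      = ∑ x ∈ I ×ˢ I, ∑ n ∈ Finset.Icc 1 N,
          (if x.1 ∣ (n+2) ∧ x.2 ∣ (n+2) then (1:ℝ) else 0) := by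
        rw [← Finset.sum_comm]
        exact Finset.sum_congr rfl fun n _ => step1 n
    _ ≤ ∑ x ∈ I ×ˢ I, ((N:ℝ) + 2) * ((Nat.gcd x.1 x.2 : ℝ) / ((x.1 : ℝ) * (x.2 : ℝ))) := by
        refine Finset.sum_le_sum fun x hx => ?_
        obtain ⟨hx1, hx2⟩ := Finset.mem_product.mp hx
        rw [hI, Finset.mem_Icc] at hx1 hx2
        have hd1 : 1 ≤ x.1 := hx1.1
        have he1 : 1 ≤ x.2 := hx2.1
        -- count n in [1,N] with lcm | n+2
        have hcount : ∑ n ∈ Finset.Icc 1 N, (if x.1 ∣ (n+2) ∧ x.2 ∣ (n+2) then (1:ℝ) else 0)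
            ≤ ((N:ℝ) + 2) / (Nat.lcm x.1 x.2 : ℝ) := by
          rw [← Finset.sum_filter, Finset.sum_const, nsmul_eq_mul, mul_one]
          have hinj : (((Finset.Icc 1 N).filter
              (fun n => x.1 ∣ (n+2) ∧ x.2 ∣ (n+2))).card : ℝ) ≤
              (((Finset.Icc 1 (N+2)).filter (fun m => Nat.lcm x.1 x.2 ∣ m)).card : ℝ) := by
            have := Finset.card_le_card_of_injOn (f := fun n => n + 2)
              (s := (Finset.Icc 1 N).filter (fun n => x.1 ∣ (n+2) ∧ x.2 ∣ (n+2)))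
              (t := (Finset.Icc 1 (N+2)).filter (fun m => Nat.lcm x.1 x.2 ∣ m))
              ?_ ?_
            · exact_mod_cast this
            · intro n hn
              simp only [Finset.coe_filter, Set.mem_setOf_eq, Finset.mem_coe, Finset.mem_filter, Finset.mem_Icc] at hn ⊢
              exact ⟨⟨by omega, by omega⟩, Nat.lcm_dvd_iff.mpr hn.2⟩
            · intro a _ b _ h
              simp only at h
              omega
          refine hinj.trans ?_
          refine (count_dvd_le (N+2) (Nat.lcm x.1 x.2) ?_).trans ?_
          · exact Nat.one_le_iff_ne_zero.mpr (Nat.lcm_ne_zero (by omega) (by omega))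
          · push_cast
            exact le_rfl
        refine hcount.trans (le_of_eq ?_)
        have hprod : (Nat.gcd x.1 x.2 : ℝ) * (Nat.lcm x.1 x.2 : ℝ) = (x.1 : ℝ) * (x.2 : ℝ) := by
          exact_mod_cast congrArg (Nat.cast : ℕ → ℝ) (Nat.gcd_mul_lcm x.1 x.2)
        have hlcm : (0:ℝ) < (Nat.lcm x.1 x.2 : ℝ) := by
          have : Nat.lcm x.1 x.2 ≠ 0 := Nat.lcm_ne_zero (by omega) (by omega)
          exact_mod_cast Nat.pos_of_ne_zero this
        have hgcd : (0:ℝ) < (Nat.gcd x.1 x.2 : ℝ) := by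
          have : 0 < Nat.gcd x.1 x.2 := Nat.gcd_pos_of_pos_left _ (by omega)
          exact_mod_cast this
        field_simp
        linear_combination -hprod
    _ = ((N:ℝ) + 2) * ∑ x ∈ I ×ˢ I, ((Nat.gcd x.1 x.2 : ℝ) / ((x.1 : ℝ) * (x.2 : ℝ))) := by
        rw [Finset.mul_sum]
    _ ≤ ((N:ℝ) + 2) * (1 + Real.log D')^3 := by
        have hN2 : (0:ℝ) ≤ (N:ℝ) + 2 := by positivity
        refine mul_le_mul_of_nonneg_left ?_ hN2
        -- bound gcd by sum over common divisors
        have hgcdle : ∀ x ∈ I ×ˢ I, (Nat.gcd x.1 x.2 : ℝ) / ((x.1:ℝ) * x.2) ≤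
            ∑ g ∈ I, (if g ∣ x.1 ∧ g ∣ x.2 then (g:ℝ) / ((x.1:ℝ) * x.2) else 0) := by
          intro x hx
          obtain ⟨hx1, hx2⟩ := Finset.mem_product.mp hx
          rw [hI, Finset.mem_Icc] at hx1 hx2
          have hde : (0:ℝ) < (x.1:ℝ) * x.2 := by
            have : (0:ℝ) < (x.1:ℝ) := by exact_mod_cast hx1.1
            have : (0:ℝ) < (x.2:ℝ) := by exact_mod_cast hx2.1
            positivity
          rw [div_le_iff₀ hde]
          have key : (Nat.gcd x.1 x.2 : ℝ) ≤
              ∑ g ∈ I, (if g ∣ x.1 ∧ g ∣ x.2 then (g:ℝ) else 0) := by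
            have hmem : Nat.gcd x.1 x.2 ∈ I := by
              rw [hI, Finset.mem_Icc]
              constructor
              · exact Nat.gcd_pos_of_pos_left _ (by omega)
              · exact le_trans (Nat.gcd_le_left _ (by omega)) hx1.2
            have := Finset.single_le_sum (f := fun g =>
                (if g ∣ x.1 ∧ g ∣ x.2 then (g:ℝ) else 0))
              (fun g _ => by positivity) hmem
            simpa [Nat.gcd_dvd_left, Nat.gcd_dvd_right] using this
          calc (Nat.gcd x.1 x.2 : ℝ) ≤
              ∑ g ∈ I, (if g ∣ x.1 ∧ g ∣ x.2 then (g:ℝ) else 0) := key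
            _ = (∑ g ∈ I, (if g ∣ x.1 ∧ g ∣ x.2 then (g:ℝ) / ((x.1:ℝ)*x.2) else 0)) *
                ((x.1:ℝ) * x.2) := by
                rw [Finset.sum_mul]
                refine Finset.sum_congr rfl fun g _ => ?_
                rw [ite_mul, zero_mul, div_mul_cancel₀]
                exact ne_of_gt hde
        refine le_trans (Finset.sum_le_sum hgcdle) ?_
        -- swap sums
        rw [Finset.sum_comm]
        -- now ∑ g ∈ I, ∑ x ∈ I ×ˢ I, ite ...
        have hswap : ∀ g ∈ I, ∑ x ∈ I ×ˢ I,
            (if g ∣ x.1 ∧ g ∣ x.2 then (g:ℝ) / ((x.1:ℝ) * x.2) else 0) =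
            (g:ℝ) * (∑ d ∈ I.filter (fun d => g ∣ d), ((d:ℝ))⁻¹)^2 := by
          intro g hg
          rw [← Finset.sum_filter]
          have hfp : ((I ×ˢ I).filter (fun x => g ∣ x.1 ∧ g ∣ x.2)) =
              (I.filter (fun d => g ∣ d)) ×ˢ (I.filter (fun d => g ∣ d)) := by
            ext x
            simp only [Finset.mem_filter, Finset.mem_product]
            tauto
          rw [hfp, Finset.sum_product]
          calc ∑ x ∈ I.filter (fun d => g ∣ d), ∑ y ∈ I.filter (fun d => g ∣ d),
                (g:ℝ) / ((((x,y).1 : ℕ):ℝ) * (((x,y).2 : ℕ):ℝ))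
              = ∑ x ∈ I.filter (fun d => g ∣ d), (g:ℝ) * ((x:ℝ))⁻¹ *
                  ∑ y ∈ I.filter (fun d => g ∣ d), ((y:ℝ))⁻¹ := by
                refine Finset.sum_congr rfl fun x _ => ?_
                rw [Finset.mul_sum]
                refine Finset.sum_congr rfl fun y _ => ?_
                rw [div_eq_mul_inv, mul_inv]
                ring
            _ = (g:ℝ) * (∑ d ∈ I.filter (fun d => g ∣ d), ((d:ℝ))⁻¹)^2 := by
                rw [← Finset.sum_mul, ← Finset.mul_sum, pow_two]
                ring
        rw [Finset.sum_congr rfl hswap]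
        -- final harmonic bound
        have hfin : ∀ g ∈ I, (g:ℝ) * (∑ d ∈ I.filter (fun d => g ∣ d), ((d:ℝ))⁻¹)^2 ≤
            (1 + Real.log D')^2 * (g:ℝ)⁻¹ := by
          intro g hg
          rw [hI, Finset.mem_Icc] at hg
          have hg1 : (1:ℝ) ≤ g := by exact_mod_cast hg.1
          have hgpos : (0:ℝ) < g := by linarith
          have hS := recip_dvd_sum_le D' g hg.1
          have hSnn : (0:ℝ) ≤ ∑ d ∈ I.filter (fun d => g ∣ d), ((d:ℝ))⁻¹ :=
            Finset.sum_nonneg fun d _ => by positivity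
          have hsq : (∑ d ∈ I.filter (fun d => g ∣ d), ((d:ℝ))⁻¹)^2 ≤
              ((g:ℝ)⁻¹ * (1 + Real.log D'))^2 := by
            apply pow_le_pow_left₀ hSnn
            exact hS
          calc (g:ℝ) * (∑ d ∈ I.filter (fun d => g ∣ d), ((d:ℝ))⁻¹)^2 ≤
              (g:ℝ) * ((g:ℝ)⁻¹ * (1 + Real.log D'))^2 := by
                exact mul_le_mul_of_nonneg_left hsq (le_of_lt hgpos)
            _ = (1 + Real.log D')^2 * (g:ℝ)⁻¹ := by
                field_simp
        refine le_trans (Finset.sum_le_sum hfin) ?_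
        rw [← Finset.mul_sum]
        have hL : (0:ℝ) ≤ 1 + Real.log D' := by
          rcases Nat.eq_zero_or_pos D' with h | h
          · simp [h]
          · have : (1:ℝ) ≤ (D':ℝ) := by exact_mod_cast h
            have := Real.log_nonneg this
            linarith
        have := hsum_le D'
        calc (1 + Real.log D')^2 * ∑ g ∈ I, ((g:ℝ))⁻¹ ≤
            (1 + Real.log D')^2 * (1 + Real.log D') := by
              apply mul_le_mul_of_nonneg_left _ (by positivity)
              exact hsum_le D'
          _ = (1 + Real.log D')^3 := by ring

lemma spacing_abs {c X : ℝ} (hc : 1 ≤ c) (hX : 0 < X) (p q : ℕ)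
    (hp : X/2 < (p:ℝ)) (hq : X/2 < (q:ℝ)) :
    (X/2)^(c-1) * |(p:ℝ) - (q:ℝ)| ≤ |(p:ℝ)^c - (q:ℝ)^c| := by
  have hX2 : (0:ℝ) < X/2 := by linarith
  have key : ∀ x y : ℝ, X/2 < y → y ≤ x →
      (X/2)^(c-1) * (x - y) ≤ x^c - y^c := by
    intro x y hy hyx
    have hy0 : (0:ℝ) < y := lt_trans hX2 hy
    have hx0 : (0:ℝ) < x := lt_of_lt_of_le hy0 hyx
    have h1 : y^(c-1) ≤ x^(c-1) := Real.rpow_le_rpow hy0.le hyx (by linarith)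
    have h2 : (X/2)^(c-1) ≤ y^(c-1) := Real.rpow_le_rpow hX2.le hy.le (by linarith)
    have hxc : x^c = x * x^(c-1) := by
      rw [← Real.rpow_one_add' hx0.le (by ring_nf; linarith : (1:ℝ) + (c-1) ≠ 0)]
      ring_nf
    have hyc : y^c = y * y^(c-1) := by
      rw [← Real.rpow_one_add' hy0.le (by ring_nf; linarith : (1:ℝ) + (c-1) ≠ 0)]
      ring_nf
    have hyp : (0:ℝ) ≤ y^(c-1) := Real.rpow_nonneg hy0.le _
    have hxgey : x * y^(c-1) ≤ x * x^(c-1) := by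
      apply mul_le_mul_of_nonneg_left h1 hx0.le
    nlinarith
  rcases le_total (q:ℝ) (p:ℝ) with h | h
  · have := key (p:ℝ) (q:ℝ) hq h
    have hcc : (q:ℝ)^c ≤ (p:ℝ)^c := Real.rpow_le_rpow (by linarith) h (by linarith)
    rw [abs_of_nonneg (by linarith), abs_of_nonneg (by linarith)]
    exact this
  · have := key (q:ℝ) (p:ℝ) hp h
    have hcc : (p:ℝ)^c ≤ (q:ℝ)^c := Real.rpow_le_rpow (by linarith) h (by linarith)
    rw [abs_of_nonpos (by linarith), abs_of_nonpos (by linarith)]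
    linarith

lemma eventually_cond (c : ℝ) (hc1 : 1 < c) :
    ∀ᶠ X : ℝ in Filter.atTop, 2 + 2*Real.log X ≤ (X/2)^(c-1) := by
  have hc' : (0:ℝ) < c - 1 := by linarith
  have h1 : ∀ᶠ Y : ℝ in Filter.atTop, ‖Real.log Y‖ ≤ 1/4 * ‖Y^(c-1)‖ :=
    (isLittleO_log_rpow_atTop hc').def (by norm_num)
  have h2 : Filter.Tendsto (fun Y:ℝ => Y^(c-1)) Filter.atTop Filter.atTop :=
    tendsto_rpow_atTop hc'
  have h3 : ∀ᶠ Y : ℝ in Filter.atTop, 4*(2+2*Real.log 2) ≤ Y^(c-1) :=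
    h2.eventually_ge_atTop _
  have h4 : ∀ᶠ Y : ℝ in Filter.atTop, (1:ℝ) ≤ Y := Filter.eventually_ge_atTop 1
  have hY : ∀ᶠ Y : ℝ in Filter.atTop, 2 + 2*Real.log (2*Y) ≤ Y^(c-1) := by
    filter_upwards [h1, h3, h4] with Y hb hg h1Y
    have hY0 : (0:ℝ) < Y := by linarith
    have hrn : ‖Y^(c-1)‖ = Y^(c-1) := by
      rw [Real.norm_eq_abs, abs_of_nonneg (Real.rpow_nonneg hY0.le _)]
    rw [hrn, Real.norm_eq_abs] at hb
    have hlog : Real.log (2*Y) = Real.log 2 + Real.log Y :=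
      Real.log_mul (by norm_num) (ne_of_gt hY0)
    have habs := le_abs_self (Real.log Y)
    have hl2 : (0:ℝ) ≤ Real.log 2 := Real.log_nonneg (by norm_num)
    rw [hlog]
    nlinarith
  have htend : Filter.Tendsto (fun X:ℝ => X/2) Filter.atTop Filter.atTop :=
    Filter.tendsto_id.atTop_div_const (by norm_num)
  filter_upwards [htend.eventually hY, Filter.eventually_gt_atTop 0] with X hX hX0
  have : (2:ℝ) * (X/2) = X := by ring
  rw [this] at hX
  exact hX

set_option maxHeartbeats 1000000 in
theorem L_square_integral_unit_interval (c : ℝ) (hc1 : 1 < c) (hc2 : c < 832 / 825) :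
    ∃ C : ℝ, 0 < C ∧ ∃ X₀ : ℝ, ∀ X : ℝ, X₀ ≤ X →
      ∀ lam : ℕ → ℂ,
        (∀ d : ℕ, ‖lam d‖ ≤ 1) →
        (∀ d : ℕ, (2 ∣ d ∨ ¬ Squarefree d) → lam d = 0) →
        (∫ t in (0 : ℝ)..1,
            ‖∑ d ∈ Finset.Icc 1 ⌊X ^ ((1 : ℝ) / 11 - 0.001)⌋₊, lam d *
                ∑ p ∈ (Finset.Icc 1 ⌊X⌋₊).filter
                    (fun p : ℕ => p.Prime ∧ X / 2 < (p : ℝ) ∧ d ∣ (p + 2)),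
                  Complex.exp (2 * (Real.pi : ℂ) * Complex.I * (((p : ℝ) ^ c * t : ℝ) : ℂ)) *
                    (Real.log p : ℂ)‖ ^ 2) ≤
          C * X * Real.log X ^ 5 := by
  classical
  have hev : ∀ᶠ X : ℝ in Filter.atTop,
      (8 ≤ X ∧ 2 + 2*Real.log X ≤ (X/2)^(c-1)) :=
    (Filter.eventually_ge_atTop 8).and (eventually_cond c hc1)
  obtain ⟨X₀, hX₀⟩ := Filter.eventually_atTop.mp hev
  refine ⟨32, by norm_num, X₀, ?_⟩
  intro X hXX lam hlam _
  obtain ⟨hX8, hcond⟩ := hX₀ X hXX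
  have hXpos : (0:ℝ) < X := by linarith
  set N : ℕ := ⌊X⌋₊ with hN
  set D' : ℕ := ⌊X ^ ((1 : ℝ) / 11 - 0.001)⌋₊ with hD'
  set I : Finset ℕ := Finset.Icc 1 D' with hIdef
  set P : Finset ℕ := (Finset.Icc 1 N).filter (fun p : ℕ => p.Prime ∧ X / 2 < (p : ℝ))
    with hPdef
  set β : ℕ → ℝ := fun p => (p:ℝ)^c with hβ
  set W : ℕ → ℂ := fun p => (∑ d ∈ I.filter (· ∣ (p+2)), lam d) * (Real.log p : ℂ) with hW
  set M : ℝ := (X/2)^(c-1) with hM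
  have hMpos : (0:ℝ) < M := Real.rpow_pos_of_pos (by linarith) _
  have hlogX1 : (1:ℝ) ≤ Real.log X := by
    have h3 : Real.exp 1 < 3 := by
      have := Real.exp_one_lt_d9
      linarith
    have : Real.exp 1 ≤ X := by linarith
    calc (1:ℝ) = Real.log (Real.exp 1) := (Real.log_exp 1).symm
      _ ≤ Real.log X := Real.log_le_log (Real.exp_pos 1) this
  -- Step A : rewrite the integrand
  have hA : ∀ t : ℝ,
      (∑ d ∈ I, lam d *
        ∑ p ∈ (Finset.Icc 1 N).filter
            (fun p : ℕ => p.Prime ∧ X / 2 < (p : ℝ) ∧ d ∣ (p + 2)),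
          Complex.exp (2 * (Real.pi : ℂ) * Complex.I * (((p : ℝ) ^ c * t : ℝ) : ℂ)) *
            (Real.log p : ℂ)) = ∑ p ∈ P, W p * Efun (β p) t := by
    intro t
    have h1 : ∀ d ∈ I, lam d *
        ∑ p ∈ (Finset.Icc 1 N).filter
            (fun p : ℕ => p.Prime ∧ X / 2 < (p : ℝ) ∧ d ∣ (p + 2)),
          Complex.exp (2 * (Real.pi : ℂ) * Complex.I * (((p : ℝ) ^ c * t : ℝ) : ℂ)) *
            (Real.log p : ℂ) =
        ∑ p ∈ (Finset.Icc 1 N).filter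
            (fun p : ℕ => p.Prime ∧ X / 2 < (p : ℝ) ∧ d ∣ (p + 2)),
          lam d * (Efun (β p) t * (Real.log p : ℂ)) := fun d _ => Finset.mul_sum _ _ _
    rw [Finset.sum_congr rfl h1]
    rw [Finset.sum_comm' (s := I)
      (t := fun d => (Finset.Icc 1 N).filter
        (fun p : ℕ => p.Prime ∧ X / 2 < (p : ℝ) ∧ d ∣ (p + 2)))
      (t' := P) (s' := fun p => I.filter (· ∣ (p+2))) ?_]
    · refine Finset.sum_congr rfl fun p _ => ?_
      rw [hW]
      rw [← Finset.sum_mul]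
      ring
    · intro d p
      simp only [hPdef, Finset.mem_filter]
      tauto
  rw [intervalIntegral.integral_congr (g := fun t => ‖∑ p ∈ P, W p * Efun (β p) t‖^2)
    (fun t _ => by rw [hA t])]
  -- Step B : expand
  refine le_trans (expand_integral P W β) ?_
  -- Step C : diagonal/off-diagonal
  have hPsub : P ⊆ Finset.Icc 1 N := Finset.filter_subset _ _
  have habs1 : ∀ p ∈ P, ∀ q ∈ P, p ≠ q → (1:ℝ) ≤ |(p:ℝ) - (q:ℝ)| := by
    intro p _ q _ hne
    have : ((p:ℤ) - q) ≠ 0 := sub_ne_zero.mpr (by exact_mod_cast hne)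
    have h1 : (1:ℤ) ≤ |(p:ℤ) - q| := Int.one_le_abs this
    have : ((1:ℤ):ℝ) ≤ ((|(p:ℤ) - q| : ℤ) : ℝ) := by exact_mod_cast h1
    push_cast at this
    convert this using 2
  have hspace : ∀ p ∈ P, ∀ q ∈ P, p ≠ q →
      ‖∫ t in (0:ℝ)..1, Efun (β p - β q) t‖ ≤ 1 / (M * |(p:ℝ) - (q:ℝ)|) := by
    intro p hp q hq hne
    have hpmem := Finset.mem_filter.mp (hPdef ▸ hp)
    have hqmem := Finset.mem_filter.mp (hPdef ▸ hq)
    have hp2 : X/2 < (p:ℝ) := hpmem.2.2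
    have hq2 : X/2 < (q:ℝ) := hqmem.2.2
    have h1 := habs1 p hp q hq hne
    have hsp := spacing_abs (le_of_lt hc1) hXpos p q hp2 hq2
    have hlb : M * |(p:ℝ) - (q:ℝ)| ≤ |β p - β q| := by
      rw [hβ, hM]
      exact hsp
    have hpos : (0:ℝ) < M * |(p:ℝ) - (q:ℝ)| := by
      apply mul_pos hMpos; linarith
    have hne2 : β p - β q ≠ 0 := by
      intro h
      rw [h, abs_zero] at hlb
      linarith
    refine (norm_intEfun_le_inv _ hne2).trans ?_
    apply one_div_le_one_div_of_le hpos hlb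
  have hdiag : ∀ p ∈ P, ‖W p‖ * ‖W p‖ * ‖∫ t in (0:ℝ)..1, Efun (β p - β p) t‖
      = ‖W p‖^2 := by
    intro p _
    have h0 : β p - β p = 0 := sub_self _
    rw [h0]
    have : (∫ t in (0:ℝ)..1, Efun 0 t) = 1 := by
      simp [Efun_zero]
    rw [this]
    simp [pow_two]
  have hsplit : ∑ p ∈ P, ∑ q ∈ P, ‖W p‖ * ‖W q‖ * ‖∫ t in (0:ℝ)..1, Efun (β p - β q) t‖
      = ∑ p ∈ P, ‖W p‖^2 +
        ∑ p ∈ P, ∑ q ∈ P.erase p, ‖W p‖ * ‖W q‖ * ‖∫ t in (0:ℝ)..1, Efun (β p - β q) t‖ := by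
    rw [← Finset.sum_add_distrib]
    refine Finset.sum_congr rfl fun p hp => ?_
    rw [← hdiag p hp]
    exact (Finset.add_sum_erase P _ hp).symm
  rw [hsplit]
  -- off-diagonal bound
  have hoff : ∑ p ∈ P, ∑ q ∈ P.erase p,
      ‖W p‖ * ‖W q‖ * ‖∫ t in (0:ℝ)..1, Efun (β p - β q) t‖ ≤
      ∑ p ∈ P, ‖W p‖^2 := by
    have hstep1 : ∀ p ∈ P, ∀ q ∈ P.erase p,
        ‖W p‖ * ‖W q‖ * ‖∫ t in (0:ℝ)..1, Efun (β p - β q) t‖ ≤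
        (‖W p‖^2 + ‖W q‖^2) * (1 / (2 * M * |(p:ℝ) - (q:ℝ)|)) := by
      intro p hp q hq
      obtain ⟨hne, hqP⟩ := Finset.mem_erase.mp hq
      have hb := hspace p hp q hqP (Ne.symm hne)
      have h1 := habs1 p hp q hqP (Ne.symm hne)
      have hpos : (0:ℝ) < M * |(p:ℝ) - (q:ℝ)| := by
        apply mul_pos hMpos; linarith
      calc ‖W p‖ * ‖W q‖ * ‖∫ t in (0:ℝ)..1, Efun (β p - β q) t‖ ≤
          ‖W p‖ * ‖W q‖ * (1 / (M * |(p:ℝ) - (q:ℝ)|)) := by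
            apply mul_le_mul_of_nonneg_left hb (by positivity)
        _ ≤ (‖W p‖^2 + ‖W q‖^2) * (1 / (2 * M * |(p:ℝ) - (q:ℝ)|)) := by
            rw [div_eq_mul_inv, div_eq_mul_inv, one_mul, one_mul]
            have hinv : ((2:ℝ) * M * |(p:ℝ) - (q:ℝ)|)⁻¹ =
                (M * |(p:ℝ) - (q:ℝ)|)⁻¹ / 2 := by
              field_simp
            rw [hinv]
            have hsq : ‖W p‖ * ‖W q‖ ≤ (‖W p‖^2 + ‖W q‖^2)/2 := by
              nlinarith [sq_nonneg (‖W p‖ - ‖W q‖)]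
            calc ‖W p‖ * ‖W q‖ * (M * |(p:ℝ) - (q:ℝ)|)⁻¹ ≤
                (‖W p‖^2 + ‖W q‖^2)/2 * (M * |(p:ℝ) - (q:ℝ)|)⁻¹ := by
                  apply mul_le_mul_of_nonneg_right hsq (by positivity)
              _ = (‖W p‖^2 + ‖W q‖^2) * ((M * |(p:ℝ) - (q:ℝ)|)⁻¹ / 2) := by ring
    have hrecip : ∀ p ∈ P, ∑ q ∈ P.erase p, 1 / |(p:ℝ) - (q:ℝ)| ≤ 2*(1 + Real.log N) := by
      intro p hp
      refine le_trans (Finset.sum_le_sum_of_subset_of_nonneg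
        (Finset.erase_subset_erase p hPsub) ?_) (recip_dist_le N p (hPsub hp))
      intro q _ _
      positivity
    -- symmetric swap for the second part
    have hcomm : ∑ p ∈ P, ∑ q ∈ P.erase p, ‖W q‖^2 * (1 / (2 * M * |(p:ℝ) - (q:ℝ)|)) =
        ∑ q ∈ P, ∑ p ∈ P.erase q, ‖W q‖^2 * (1 / (2 * M * |(p:ℝ) - (q:ℝ)|)) := by
      refine Finset.sum_comm' ?_
      intro p q
      simp only [Finset.mem_erase]
      constructor
      · rintro ⟨h1, h2, h3⟩
        exact ⟨⟨Ne.symm h2, h1⟩, h3⟩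
      · rintro ⟨⟨h1, h2⟩, h3⟩
        exact ⟨h2, Ne.symm h1, h3⟩
    have hhalf : ∀ p ∈ P, ∑ q ∈ P.erase p, ‖W p‖^2 * (1 / (2 * M * |(p:ℝ) - (q:ℝ)|)) ≤
        ‖W p‖^2 * ((1 + Real.log N) / M) := by
      intro p hp
      have : ∑ q ∈ P.erase p, ‖W p‖^2 * (1 / (2 * M * |(p:ℝ) - (q:ℝ)|)) =
          (‖W p‖^2 / (2*M)) * ∑ q ∈ P.erase p, 1 / |(p:ℝ) - (q:ℝ)| := by
        rw [Finset.mul_sum]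
        refine Finset.sum_congr rfl fun q _ => ?_
        field_simp
      rw [this]
      calc (‖W p‖^2 / (2*M)) * ∑ q ∈ P.erase p, 1 / |(p:ℝ) - (q:ℝ)| ≤
          (‖W p‖^2 / (2*M)) * (2*(1 + Real.log N)) := by
            apply mul_le_mul_of_nonneg_left (hrecip p hp) (by positivity)
        _ = ‖W p‖^2 * ((1 + Real.log N) / M) := by
            field_simp
    have hhalf' : ∀ q ∈ P, ∑ p ∈ P.erase q, ‖W q‖^2 * (1 / (2 * M * |(p:ℝ) - (q:ℝ)|)) ≤
        ‖W q‖^2 * ((1 + Real.log N) / M) := by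
      intro q hq
      have heq : ∑ p ∈ P.erase q, ‖W q‖^2 * (1 / (2 * M * |(p:ℝ) - (q:ℝ)|)) =
          ∑ p ∈ P.erase q, ‖W q‖^2 * (1 / (2 * M * |(q:ℝ) - (p:ℝ)|)) := by
        refine Finset.sum_congr rfl fun p _ => ?_
        rw [abs_sub_comm]
      rw [heq]
      exact hhalf q hq
    have hfrac : (1 + Real.log N) / M ≤ 1/2 := by
      rw [div_le_iff₀ hMpos]
      have hNlog : Real.log N ≤ Real.log X := by
        have hNX : (N:ℝ) ≤ X := Nat.floor_le hXpos.le
        have hN1 : (1:ℝ) ≤ (N:ℝ) := by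
          have : (1:ℕ) ≤ N := Nat.le_floor (by push_cast; linarith)
          exact_mod_cast this
        exact Real.log_le_log (by linarith) hNX
      linarith [hcond]
    calc ∑ p ∈ P, ∑ q ∈ P.erase p,
        ‖W p‖ * ‖W q‖ * ‖∫ t in (0:ℝ)..1, Efun (β p - β q) t‖
        ≤ ∑ p ∈ P, ∑ q ∈ P.erase p,
          (‖W p‖^2 + ‖W q‖^2) * (1 / (2 * M * |(p:ℝ) - (q:ℝ)|)) := by
          refine Finset.sum_le_sum fun p hp => Finset.sum_le_sum fun q hq => ?_
          exact hstep1 p hp q hq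
      _ = ∑ p ∈ P, ∑ q ∈ P.erase p, ‖W p‖^2 * (1 / (2 * M * |(p:ℝ) - (q:ℝ)|)) +
          ∑ p ∈ P, ∑ q ∈ P.erase p, ‖W q‖^2 * (1 / (2 * M * |(p:ℝ) - (q:ℝ)|)) := by
          rw [← Finset.sum_add_distrib]
          refine Finset.sum_congr rfl fun p _ => ?_
          rw [← Finset.sum_add_distrib]
          refine Finset.sum_congr rfl fun q _ => ?_
          ring
      _ ≤ ∑ p ∈ P, ‖W p‖^2 * ((1 + Real.log N) / M) +
          ∑ q ∈ P, ‖W q‖^2 * ((1 + Real.log N) / M) := by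
          apply add_le_add
          · exact Finset.sum_le_sum hhalf
          · rw [hcomm]
            exact Finset.sum_le_sum hhalf'
      _ ≤ ∑ p ∈ P, ‖W p‖^2 * (1/2) + ∑ q ∈ P, ‖W q‖^2 * (1/2) := by
          apply add_le_add <;>
          · refine Finset.sum_le_sum fun p _ => ?_
            apply mul_le_mul_of_nonneg_left hfrac (by positivity)
      _ = ∑ p ∈ P, ‖W p‖^2 := by
          rw [← Finset.sum_add_distrib]
          refine Finset.sum_congr rfl fun p _ => ?_
          ring
  -- Step D : pointwise bound on W
  have hWb : ∀ p ∈ P, ‖W p‖^2 ≤ ((I.filter (· ∣ (p+2))).card : ℝ)^2 * Real.log X^2 := by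
    intro p hp
    have hpmem := Finset.mem_filter.mp (hPdef ▸ hp)
    have hp1 : 1 ≤ p := (Finset.mem_Icc.mp hpmem.1).1
    have hpN : p ≤ N := (Finset.mem_Icc.mp hpmem.1).2
    have hpX : (p:ℝ) ≤ X := by
      calc (p:ℝ) ≤ (N:ℝ) := by exact_mod_cast hpN
        _ ≤ X := Nat.floor_le hXpos.le
    have hlogp : |Real.log p| ≤ Real.log X := by
      rw [abs_of_nonneg (Real.log_nonneg (by exact_mod_cast hp1))]
      exact Real.log_le_log (by exact_mod_cast hp1) hpX
    have hsum : ‖∑ d ∈ I.filter (· ∣ (p+2)), lam d‖ ≤ ((I.filter (· ∣ (p+2))).card : ℝ) := by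
      refine (norm_sum_le _ _).trans ?_
      calc ∑ d ∈ I.filter (· ∣ (p+2)), ‖lam d‖ ≤ ∑ d ∈ I.filter (· ∣ (p+2)), 1 :=
          Finset.sum_le_sum fun d _ => hlam d
        _ = ((I.filter (· ∣ (p+2))).card : ℝ) := by simp
    have hnw : ‖W p‖ ≤ ((I.filter (· ∣ (p+2))).card : ℝ) * Real.log X := by
      rw [hW]
      simp only [norm_mul, Complex.norm_real, Real.norm_eq_abs]
      apply mul_le_mul hsum hlogp (abs_nonneg _) (Nat.cast_nonneg _)
    calc ‖W p‖^2 ≤ (((I.filter (· ∣ (p+2))).card : ℝ) * Real.log X)^2 := by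
          apply pow_le_pow_left₀ (norm_nonneg _) hnw
      _ = ((I.filter (· ∣ (p+2))).card : ℝ)^2 * Real.log X^2 := by ring
  have hsumW : ∑ p ∈ P, ‖W p‖^2 ≤
      (∑ n ∈ Finset.Icc 1 N, ((I.filter (· ∣ (n+2))).card : ℝ)^2) * Real.log X^2 := by
    rw [Finset.sum_mul]
    calc ∑ p ∈ P, ‖W p‖^2 ≤
        ∑ p ∈ P, ((I.filter (· ∣ (p+2))).card : ℝ)^2 * Real.log X^2 :=
          Finset.sum_le_sum hWb
      _ ≤ ∑ n ∈ Finset.Icc 1 N, ((I.filter (· ∣ (n+2))).card : ℝ)^2 * Real.log X^2 := by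
          refine Finset.sum_le_sum_of_subset_of_nonneg hPsub fun n _ _ => by positivity
  -- Step E : final numeric assembly
  have hdiv := divisor_sq_sum N D'
  have hD'X : (D':ℝ) ≤ X := by
    have h1 : (D':ℝ) ≤ X ^ ((1:ℝ)/11 - 0.001) :=
      Nat.floor_le (Real.rpow_nonneg hXpos.le _)
    refine h1.trans ?_
    calc X ^ ((1:ℝ)/11 - 0.001) ≤ X ^ (1:ℝ) :=
        Real.rpow_le_rpow_of_exponent_le (by linarith) (by norm_num)
      _ = X := Real.rpow_one X
  have hlogD' : 1 + Real.log D' ≤ 2 * Real.log X := by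
    rcases Nat.eq_zero_or_pos D' with h | h
    · rw [h]
      simp
      linarith
    · have h1 : (1:ℝ) ≤ (D':ℝ) := by exact_mod_cast h
      have : Real.log D' ≤ Real.log X := Real.log_le_log (by linarith) hD'X
      linarith
  have hN2X : (N:ℝ) + 2 ≤ 2 * X := by
    have : (N:ℝ) ≤ X := Nat.floor_le hXpos.le
    linarith
  have hlogXpos : (0:ℝ) < Real.log X := by linarith
  have hfinal : (∑ n ∈ Finset.Icc 1 N, ((I.filter (· ∣ (n+2))).card : ℝ)^2) ≤
      16 * X * Real.log X^3 := by
    refine hdiv.trans ?_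
    calc ((N:ℝ) + 2) * (1 + Real.log D')^3 ≤ (2*X) * (2 * Real.log X)^3 := by
          apply mul_le_mul hN2X ?_ ?_ (by positivity)
          · apply pow_le_pow_left₀ ?_ hlogD'
            rcases Nat.eq_zero_or_pos D' with h | h
            · rw [h]; simp
            · have h1 : (1:ℝ) ≤ (D':ℝ) := by exact_mod_cast h
              have := Real.log_nonneg h1
              linarith
          · positivity
      _ = 16 * X * Real.log X^3 := by ring
  calc ∑ p ∈ P, ‖W p‖^2 + ∑ p ∈ P, ∑ q ∈ P.erase p,
        ‖W p‖ * ‖W q‖ * ‖∫ t in (0:ℝ)..1, Efun (β p - β q) t‖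
      ≤ ∑ p ∈ P, ‖W p‖^2 + ∑ p ∈ P, ‖W p‖^2 := by linarith [hoff]
    _ = 2 * ∑ p ∈ P, ‖W p‖^2 := by ring
    _ ≤ 2 * ((∑ n ∈ Finset.Icc 1 N, ((I.filter (· ∣ (n+2))).card : ℝ)^2) * Real.log X^2) := by
        linarith [hsumW]
    _ ≤ 2 * ((16 * X * Real.log X^3) * Real.log X^2) := by
        have h2 : (0:ℝ) ≤ Real.log X^2 := by positivity
        nlinarith [hfinal, hsumW]
    _ = 32 * X * Real.log X^5 := by ring
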